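/- Let n ≥ 2 and let G be the fly-swatter: the complete graph on vertices v_0, v_1, …, v_n with an infinite tail attached at v_0. For every 1 ≤ p < ∞, the set of eigenvalues of the shift operator S on ℓ^p(G) is exactly {−1, b + 1/b}, where b = −1/2 + (1/2)√((n+3)/(n−1)). -/

import Mathlib

/-- The shift (adjacency) operator: `(Sf)(u) = ∑_{v ~ u} f(v)`. -/
noncomputable def shiftOp {V : Type*} (G : SimpleGraph V) (f : V → ℂ) (u : V) : ℂ :=
  ∑ᶠ v ∈ G.neighborSet u, f v

/-- Membership in ℓ^p: `∑_{v} |f(v)|^p < ∞`. -/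
def memlp {V : Type*} (f : V → ℂ) (p : ℝ) : Prop :=
  Summable fun v => ‖f v‖ ^ p

/-- Base relation for the fly-swatter: `Sum.inl j` is the complete-graph vertex `v_j`
(`j = 0, …, n`) and `Sum.inr k` is the tail vertex `u_{k+1}` (`k = 0, 1, 2, …`). -/
def flyRel (n : ℕ) : (Fin (n + 1) ⊕ ℕ) → (Fin (n + 1) ⊕ ℕ) → Prop
  | Sum.inl i, Sum.inl j => i ≠ j
  | Sum.inl i, Sum.inr k => (i : ℕ) = 0 ∧ k = 0
  | Sum.inr k, Sum.inr l => l = k + 1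
  | _, _ => False

/-- The fly-swatter: the complete graph on `v_0, …, v_n` together with the ray
`u_1 ~ u_2 ~ ⋯` and the edge `v_0 ~ u_1`. -/
def flyswatter (n : ℕ) : SimpleGraph (Fin (n + 1) ⊕ ℕ) :=
  SimpleGraph.fromRel (flyRel n)

open Sum

lemma fly_adj (n : ℕ) (x y) : (flyswatter n).Adj x y ↔ x ≠ y ∧ (flyRel n x y ∨ flyRel n y x) := by
  simp [flyswatter, SimpleGraph.fromRel_adj]

lemma nb_inl (n : ℕ) (j : Fin (n+1)) (hj : j ≠ 0) :
    (flyswatter n).neighborSet (inl j) =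
      ↑((Finset.univ.erase j).image (inl : Fin (n+1) → Fin (n+1) ⊕ ℕ)) := by
  ext y
  rcases y with i | k
  · simp [SimpleGraph.neighborSet, fly_adj, flyRel, eq_comm, Ne, and_comm]
  · simp [SimpleGraph.neighborSet, fly_adj, flyRel]
    intro h
    exact absurd h hj

lemma nb_inl0 (n : ℕ) :
    (flyswatter n).neighborSet (inl (0 : Fin (n+1)))
      = ↑(((Finset.univ.erase (0 : Fin (n+1))).image
            (inl : Fin (n+1) → Fin (n+1) ⊕ ℕ)) ∪ {inr 0}) := by
  ext y
  rcases y with i | k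
  · simp [SimpleGraph.neighborSet, fly_adj, flyRel, eq_comm, Ne]
  · simp [SimpleGraph.neighborSet, fly_adj, flyRel, eq_comm]

lemma nb_inr0 (n : ℕ) :
    (flyswatter n).neighborSet (inr 0 : Fin (n+1) ⊕ ℕ)
      = ↑({inl 0, inr 1} : Finset (Fin (n+1) ⊕ ℕ)) := by
  ext y
  rcases y with i | k
  · simp [SimpleGraph.neighborSet, fly_adj, flyRel]
  · simp [SimpleGraph.neighborSet, fly_adj, flyRel]
    omega

lemma nb_inr (n : ℕ) (k : ℕ) :
    (flyswatter n).neighborSet (inr (k+1) : Fin (n+1) ⊕ ℕ)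
      = ↑({inr k, inr (k+2)} : Finset (Fin (n+1) ⊕ ℕ)) := by
  ext y
  rcases y with i | l
  · simp [SimpleGraph.neighborSet, fly_adj, flyRel]
  · simp [SimpleGraph.neighborSet, fly_adj, flyRel]
    omega

lemma shift_inl (n : ℕ) (f : (Fin (n+1) ⊕ ℕ) → ℂ) (j : Fin (n+1)) (hj : j ≠ 0) :
    shiftOp (flyswatter n) f (inl j) = (∑ i, f (inl i)) - f (inl j) := by
  rw [shiftOp, nb_inl n j hj, finsum_mem_coe_finset,
    Finset.sum_image (fun a _ b _ h => inl_injective h),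
    Finset.sum_erase_eq_sub (Finset.mem_univ j)]

lemma shift_inl0 (n : ℕ) (f : (Fin (n+1) ⊕ ℕ) → ℂ) :
    shiftOp (flyswatter n) f (inl 0) = (∑ i, f (inl i)) - f (inl 0) + f (inr 0) := by
  rw [shiftOp, nb_inl0 n, finsum_mem_coe_finset, Finset.sum_union (by simp),
    Finset.sum_image (fun a _ b _ h => inl_injective h),
    Finset.sum_erase_eq_sub (Finset.mem_univ 0), Finset.sum_singleton]

lemma shift_inr0 (n : ℕ) (f : (Fin (n+1) ⊕ ℕ) → ℂ) :
    shiftOp (flyswatter n) f (inr 0) = f (inl 0) + f (inr 1) := by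
  rw [shiftOp, nb_inr0 n, finsum_mem_coe_finset, Finset.sum_pair (by simp)]

lemma shift_inr (n : ℕ) (f : (Fin (n+1) ⊕ ℕ) → ℂ) (k : ℕ) :
    shiftOp (flyswatter n) f (inr (k+1)) = f (inr k) + f (inr (k+2)) := by
  rw [shiftOp, nb_inr n k, finsum_mem_coe_finset, Finset.sum_pair (by simp)]

lemma summable_sum_type {m : ℕ} {F : Fin m ⊕ ℕ → ℝ} (h : Summable fun k => F (Sum.inr k)) :
    Summable F := by
  rw [← summable_subtype_and_compl (s := Set.range (Sum.inr : ℕ → Fin m ⊕ ℕ))]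
  constructor
  · exact ((Equiv.ofInjective _ Sum.inr_injective).summable_iff
      (f := fun x : Set.range (Sum.inr : ℕ → Fin m ⊕ ℕ) => F x)).1 h
  · rw [Set.compl_range_inr]
    have : Finite (Set.range (Sum.inl : Fin m → Fin m ⊕ ℕ)) := Set.finite_range _
    exact Summable.of_finite

noncomputable def bR (n : ℕ) : ℝ := -1/2 + Real.sqrt (((n:ℝ)+3)/((n:ℝ)-1)) / 2

lemma hn1 {n : ℕ} (hn : 2 ≤ n) : (1:ℝ) ≤ (n:ℝ) - 1 := by
  have : (2:ℝ) ≤ (n:ℝ) := by exact_mod_cast hn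
  linarith

lemma sqrt_gt_one {n : ℕ} (hn : 2 ≤ n) : 1 < Real.sqrt (((n:ℝ)+3)/((n:ℝ)-1)) := by
  have h1 := hn1 hn
  rw [show ((n:ℝ)+3)/((n:ℝ)-1) = 1 + 4/((n:ℝ)-1) by field_simp; ring]
  have h4 : 0 < 4/((n:ℝ)-1) := by positivity
  nlinarith [Real.sq_sqrt (by positivity : (0:ℝ) ≤ 1 + 4/((n:ℝ)-1)),
    Real.sqrt_nonneg (1 + 4/((n:ℝ)-1))]

lemma sqrt_lt_three {n : ℕ} (hn : 2 ≤ n) : Real.sqrt (((n:ℝ)+3)/((n:ℝ)-1)) < 3 := by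
  have h1 := hn1 hn
  have h2 : (2:ℝ) ≤ (n:ℝ) := by exact_mod_cast hn
  rw [Real.sqrt_lt' (by norm_num)]
  rw [div_lt_iff₀ (by linarith)]
  nlinarith

lemma bR_pos {n : ℕ} (hn : 2 ≤ n) : 0 < bR n := by
  have := sqrt_gt_one hn; unfold bR; linarith

lemma bR_lt_one {n : ℕ} (hn : 2 ≤ n) : bR n < 1 := by
  have := sqrt_lt_three hn; unfold bR; linarith

lemma bR_quad {n : ℕ} (hn : 2 ≤ n) :
    ((n:ℝ)-1) * (bR n)^2 + ((n:ℝ)-1) * (bR n) - 1 = 0 := by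
  have h1 := hn1 hn
  have hs : Real.sqrt (((n:ℝ)+3)/((n:ℝ)-1)) ^ 2 = ((n:ℝ)+3)/((n:ℝ)-1) :=
    Real.sq_sqrt (by positivity)
  have hne : (n:ℝ) - 1 ≠ 0 := by linarith
  have h2 : ((n:ℝ)-1) * Real.sqrt (((n:ℝ)+3)/((n:ℝ)-1)) ^ 2 = (n:ℝ)+3 := by
    rw [hs]; field_simp
  unfold bR
  linear_combination (1/4) * h2

lemma bC_quad {n : ℕ} (hn : 2 ≤ n) :
    ((n:ℂ)-1) * (bR n : ℂ)^2 + ((n:ℂ)-1) * (bR n : ℂ) - 1 = 0 := by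
  exact_mod_cast congrArg (Complex.ofReal) (bR_quad hn)

lemma quad_roots {n : ℕ} (hn : 2 ≤ n) (w : ℂ)
    (hw : ((n:ℂ)-1) * w^2 + ((n:ℂ)-1) * w - 1 = 0) :
    w = (bR n : ℂ) ∨ w = -1 - (bR n : ℂ) := by
  have hne : (n:ℂ) - 1 ≠ 0 := by
    have h2 : (2:ℝ) ≤ (n:ℝ) := by exact_mod_cast hn
    intro h
    have : (n:ℂ) = 1 := by linear_combination h
    have : (n:ℝ) = 1 := by exact_mod_cast this
    linarith
  have key : ((n:ℂ)-1) * (w - (bR n : ℂ)) * (w - (-1 - (bR n : ℂ))) = 0 := by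
    linear_combination hw - bC_quad hn
  rcases mul_eq_zero.1 key with h | h
  · rcases mul_eq_zero.1 h with h | h
    · exact absurd h hne
    · left; exact sub_eq_zero.1 h
  · right; exact sub_eq_zero.1 h

lemma pow_rpow_comm {r : ℝ} (hr : 0 ≤ r) (p : ℝ) (k : ℕ) : (r^k)^p = (r^p)^k := by
  rw [← Real.rpow_natCast r k, ← Real.rpow_natCast (r^p) k, ← Real.rpow_mul hr,
    ← Real.rpow_mul hr, mul_comm]

/-- the eigenvalue `-1` is an eigenvalue. -/
lemma eig_neg_one {n : ℕ} (hn : 2 ≤ n) (p : ℝ) (hp : 1 ≤ p) :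
    ∃ f : (Fin (n + 1) ⊕ ℕ) → ℂ, f ≠ 0 ∧ memlp f p ∧
      ∀ x, shiftOp (flyswatter n) f x = (-1) * f x := by
  have h3 : 3 ≤ n + 1 := by omega
  set j1 : Fin (n+1) := ⟨1, by omega⟩ with hj1
  set j2 : Fin (n+1) := ⟨2, by omega⟩ with hj2
  have hj12 : j1 ≠ j2 := by simp [hj1, hj2, Fin.ext_iff]
  have hj10 : j1 ≠ 0 := by simp [hj1, Fin.ext_iff]
  have hj20 : j2 ≠ 0 := by simp [hj2, Fin.ext_iff]
  refine ⟨Sum.elim (fun i => (if i = j1 then (1:ℂ) else 0) + (if i = j2 then -1 else 0))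
    (fun _ => 0), ?_, ?_, ?_⟩
  · intro h
    have := congrFun h (inl j1)
    simp [hj12] at this
  · apply summable_sum_type (F := fun v => ‖_‖ ^ p)
    simpa using summable_zero.congr (fun k => by
      simp [Real.zero_rpow (by linarith : p ≠ 0)])
  · have hsum : (∑ i, ((if i = j1 then (1:ℂ) else 0) + (if i = j2 then -1 else 0))) = 0 := by
      rw [Finset.sum_add_distrib, Finset.sum_ite_eq' Finset.univ j1 (fun _ => (1:ℂ)),
        Finset.sum_ite_eq' Finset.univ j2 (fun _ => (-1:ℂ))]
      simp
    intro x
    rcases x with j | k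
    · by_cases hj : j = 0
      · subst hj
        rw [shift_inl0]
        simp only [Sum.elim_inl, Sum.elim_inr, hsum]
        simp [hj10.symm, hj20.symm]
      · rw [shift_inl n _ j hj]
        simp only [Sum.elim_inl, hsum]
        ring
    · rcases k with _ | k
      · rw [shift_inr0]
        simp [hj10.symm, hj20.symm]
      · rw [shift_inr]
        simp

/-- the second eigenvalue. -/
lemma eig_b {n : ℕ} (hn : 2 ≤ n) (p : ℝ) (hp : 1 ≤ p) :
    ∃ f : (Fin (n + 1) ⊕ ℕ) → ℂ, f ≠ 0 ∧ memlp f p ∧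
      ∀ x, shiftOp (flyswatter n) f x = ((bR n : ℂ) + 1/(bR n : ℂ)) * f x := by
  have h3 : 3 ≤ n + 1 := by omega
  have hbpos := bR_pos hn
  have hblt := bR_lt_one hn
  set b : ℂ := (bR n : ℂ) with hb
  have hb0 : b ≠ 0 := by
    simp [hb, Complex.ofReal_ne_zero]; exact ne_of_gt hbpos
  have hquad := bC_quad hn
  refine ⟨Sum.elim (fun i => if i = 0 then (n:ℂ)*b else 1) (fun k => (n:ℂ) * b^(k+2)),
    ?_, ?_, ?_⟩
  · intro h
    have := congrFun h (inl ⟨1, by omega⟩)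
    have h10 : (⟨1, by omega⟩ : Fin (n+1)) ≠ 0 := by simp [Fin.ext_iff]
    simp [h10] at this
  · apply summable_sum_type (F := fun v => ‖_‖ ^ p)
    have hterm : ∀ k : ℕ, ‖(n:ℂ) * b^(k+2)‖ ^ p
        = (((n:ℝ) * (bR n)^2) ^ p) * ((bR n)^p)^k := by
      intro k
      rw [norm_mul, norm_pow, hb, Complex.norm_real, Complex.norm_natCast,
        Real.norm_eq_abs, abs_of_pos hbpos]
      rw [show (n:ℝ) * (bR n)^(k+2) = ((n:ℝ) * (bR n)^2) * (bR n)^k by ring]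
      rw [Real.mul_rpow (by positivity) (by positivity), pow_rpow_comm (le_of_lt hbpos)]
    simp only [Sum.elim_inr]
    rw [funext hterm]
    apply Summable.mul_left
    apply summable_geometric_of_lt_one (by positivity)
    exact Real.rpow_lt_one (le_of_lt hbpos) hblt (by linarith)
  · have hsum : (∑ i : Fin (n+1), (if i = 0 then (n:ℂ)*b else 1)) = (n:ℂ)*b + n := by
      have : ∀ i : Fin (n+1), (if i = 0 then (n:ℂ)*b else 1)
          = (if i = 0 then (n:ℂ)*b - 1 else 0) + 1 := by
        intro i; split <;> ring
      rw [Finset.sum_congr rfl (fun i _ => this i), Finset.sum_add_distrib,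
        Finset.sum_ite_eq' Finset.univ (0 : Fin (n+1)) (fun _ => (n:ℂ)*b - 1)]
      simp
    intro x
    rcases x with j | k
    · by_cases hj : j = 0
      · subst hj
        rw [shift_inl0]
        simp only [Sum.elim_inl, Sum.elim_inr, hsum, if_pos rfl, ↓reduceIte]
        field_simp
        ring
      · rw [shift_inl n _ j hj]
        simp only [Sum.elim_inl, hsum, if_neg hj]
        field_simp
        linear_combination hquad
    · rcases k with _ | k
      · rw [shift_inr0]
        simp only [Sum.elim_inl, Sum.elim_inr, if_pos rfl, ↓reduceIte]
        field_simp
        ring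
      · rw [shift_inr]
        simp only [Sum.elim_inr]
        field_simp
        ring

lemma forward {n : ℕ} (hn : 2 ≤ n) {p : ℝ} (hp : 1 ≤ p) {z : ℂ}
    (f : (Fin (n+1) ⊕ ℕ) → ℂ) (hf0 : f ≠ 0) (hfp : memlp f p)
    (heig : ∀ x, shiftOp (flyswatter n) f x = z * f x) :
    z = -1 ∨ z = (bR n : ℂ) + 1/(bR n : ℂ) := by
  have hp0 : p ≠ 0 := by linarith
  -- the tail tends to zero
  have htendnorm : Filter.Tendsto (fun k => ‖f (inr k)‖) Filter.atTop (nhds 0) := by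
    have hs : Summable fun k : ℕ => ‖f (inr k)‖ ^ p := hfp.comp_injective inr_injective
    have h0 := hs.tendsto_atTop_zero
    have h1 : Filter.Tendsto (fun k : ℕ => (‖f (inr k)‖ ^ p) ^ p⁻¹) Filter.atTop
        (nhds ((0:ℝ) ^ p⁻¹)) := h0.rpow_const (Or.inr (by positivity))
    rw [Real.zero_rpow (inv_ne_zero hp0)] at h1
    have heq : ∀ k : ℕ, (‖f (inr k)‖ ^ p) ^ p⁻¹ = ‖f (inr k)‖ :=
      fun k => Real.rpow_rpow_inv (norm_nonneg _) hp0
    rwa [funext heq] at h1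
  by_cases hz1 : z = -1
  · exact Or.inl hz1
  right
  have hz1' : z + 1 ≠ 0 := fun h => hz1 (by linear_combination h)
  -- construct a root b of X² - zX + 1 with ‖b‖ ≤ 1
  obtain ⟨b, hbnorm, hb0, hbz⟩ : ∃ b : ℂ, ‖b‖ ≤ 1 ∧ b ≠ 0 ∧ b^2 - z*b + 1 = 0 := by
    have hr2 : ((z^2 - 4) ^ (((2:ℕ):ℂ))⁻¹)^2 = z^2 - 4 :=
      Complex.cpow_nat_inv_pow _ two_ne_zero
    set r : ℂ := (z^2 - 4) ^ (((2:ℕ):ℂ))⁻¹ with hrdef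
    have hq1 : ((z+r)/2)^2 - z*((z+r)/2) + 1 = 0 := by linear_combination ((1:ℂ)/4) * hr2
    have hq2 : ((z-r)/2)^2 - z*((z-r)/2) + 1 = 0 := by linear_combination ((1:ℂ)/4) * hr2
    have hne1 : (z+r)/2 ≠ 0 := by
      intro h; rw [h] at hq1; simp at hq1
    have hne2 : (z-r)/2 ≠ 0 := by
      intro h; rw [h] at hq2; simp at hq2
    by_cases h : ‖(z+r)/2‖ ≤ 1
    · exact ⟨(z+r)/2, h, hne1, hq1⟩
    · refine ⟨(z-r)/2, ?_, hne2, hq2⟩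
      have hm : ‖(z+r)/2‖ * ‖(z-r)/2‖ = 1 := by
        rw [← norm_mul, show (z+r)/2 * ((z-r)/2) = 1 by linear_combination (-(1:ℂ)/4) * hr2,
          norm_one]
      push_neg at h
      nlinarith [norm_nonneg ((z-r)/2)]
  -- tail recurrence
  have hrec : ∀ k, f (inr (k+2)) = z * f (inr (k+1)) - f (inr k) := by
    intro k
    have h := (shift_inr n f k).symm.trans (heig (inr (k+1)))
    linear_combination h
  -- Wronskian
  set W : ℕ → ℂ := fun k => f (inr (k+1)) * b^k - f (inr k) * b^(k+1) with hW
  have hWstep : ∀ k, W (k+1) = W k := by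
    intro k
    show f (inr (k+2)) * b^(k+1) - f (inr (k+1)) * b^(k+2)
      = f (inr (k+1)) * b^k - f (inr k) * b^(k+1)
    rw [hrec k]
    linear_combination (-(f (inr (k+1))) * b^k) * hbz
  have hWconst : ∀ k, W k = W 0 := by
    intro k
    induction k with
    | zero => rfl
    | succ k ih => rw [hWstep k, ih]
  have hW0 : W 0 = 0 := by
    have hWt : Filter.Tendsto W Filter.atTop (nhds 0) := by
      rw [tendsto_zero_iff_norm_tendsto_zero]
      apply squeeze_zero (g := fun k => ‖f (inr (k+1))‖ + ‖f (inr k)‖)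
          (fun k => norm_nonneg _)
      · intro k
        calc ‖W k‖ ≤ ‖f (inr (k+1)) * b^k‖ + ‖f (inr k) * b^(k+1)‖ := norm_sub_le _ _
          _ ≤ ‖f (inr (k+1))‖ + ‖f (inr k)‖ := by
              rw [norm_mul, norm_mul, norm_pow, norm_pow]
              have h1 : ‖b‖^k ≤ 1 := pow_le_one₀ (norm_nonneg b) hbnorm
              have h2 : ‖b‖^(k+1) ≤ 1 := pow_le_one₀ (norm_nonneg b) hbnorm
              have h3 : (0:ℝ) ≤ ‖b‖^k := by positivity
              have h4 : (0:ℝ) ≤ ‖b‖^(k+1) := by positivity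
              nlinarith [norm_nonneg (f (inr (k+1))), norm_nonneg (f (inr k))]
      · have h1 : Filter.Tendsto (fun k => ‖f (inr (k+1))‖) Filter.atTop (nhds 0) := by
          have := htendnorm.comp (Filter.tendsto_add_atTop_nat 1)
          exact this
        simpa using h1.add htendnorm
    have hWt' : Filter.Tendsto W Filter.atTop (nhds (W 0)) :=
      tendsto_const_nhds.congr (fun k => (hWconst k).symm)
    exact tendsto_nhds_unique hWt' hWt
  have hstep : ∀ k, f (inr (k+1)) = b * f (inr k) := by
    intro k
    have h : W k = 0 := (hWconst k).trans hW0
    have h' : f (inr (k+1)) * b^k - f (inr k) * b^(k+1) = 0 := h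
    have hbk : b^k ≠ 0 := pow_ne_zero _ hb0
    have h2 : f (inr (k+1)) * b^k = (b * f (inr k)) * b^k := by linear_combination h'
    exact mul_right_cancel₀ hbk h2
  have hgeom : ∀ k, f (inr k) = f (inr 0) * b^k := by
    intro k
    induction k with
    | zero => simp
    | succ k ih => rw [hstep k, ih]; ring
  -- the complete part
  have hTj : ∀ j : Fin (n+1), j ≠ 0 → (z+1) * f (inl j) = ∑ i, f (inl i) := by
    intro j hj
    have h := (shift_inl n f j hj).symm.trans (heig (inl j))
    linear_combination -h
  have hone : (⟨1, by omega⟩ : Fin (n+1)) ≠ 0 := by simp [Fin.ext_iff]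
  set a : ℂ := f (inl ⟨1, by omega⟩) with ha
  have haj : ∀ j : Fin (n+1), j ≠ 0 → f (inl j) = a := by
    intro j hj
    apply mul_left_cancel₀ hz1'
    rw [hTj j hj, ha, hTj _ hone]
  have hT : (∑ i, f (inl i)) = f (inl 0) + n * a := by
    rw [← Finset.sum_erase_add _ _ (Finset.mem_univ (0 : Fin (n+1)))]
    rw [Finset.sum_congr rfl (fun i hi => haj i (Finset.ne_of_mem_erase hi))]
    rw [Finset.sum_const, Finset.card_erase_of_mem (Finset.mem_univ _), Finset.card_univ]
    simp [nsmul_eq_mul]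
    ring
  have E1 : (z+1) * a = f (inl 0) + n * a := by rw [← hT]; exact hTj _ hone
  have E0 : z * f (inl 0) = n * a + f (inr 0) := by
    have h := (shift_inl0 n f).symm.trans (heig (inl 0))
    rw [hT] at h
    linear_combination -h
  have R0 : z * f (inr 0) = f (inl 0) + f (inr 1) :=
    ((shift_inr0 n f).symm.trans (heig (inr 0))).symm
  have hnC : (n:ℂ) ≠ 0 := Nat.cast_ne_zero.2 (by omega)
  by_cases hg0 : f (inr 0) = 0
  · exfalso
    apply hf0
    have hg1 : f (inr 1) = 0 := by rw [hstep 0, hg0, mul_zero]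
    have hw0 : f (inl 0) = 0 := by rw [hg0, hg1] at R0; linear_combination -R0
    have ha0 : a = 0 := by
      rw [hw0, hg0] at E0
      have : (n:ℂ) * a = 0 := by linear_combination -E0
      exact (mul_eq_zero.1 this).resolve_left hnC
    funext x
    rcases x with j | k
    · by_cases hj : j = 0
      · subst hj; exact hw0
      · rw [Pi.zero_apply, haj j hj, ha0]
    · rw [Pi.zero_apply, hgeom k, hg0, zero_mul]
  · have hbinv : (z - b) * b = 1 := by linear_combination -hbz
    have hw0 : f (inl 0) = (z - b) * f (inr 0) := by
      have hg1 : f (inr 1) = b * f (inr 0) := hstep 0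
      rw [hg1] at R0
      linear_combination -R0
    have hzb0 : z - b ≠ 0 := by
      intro h; rw [h, zero_mul] at hbinv; exact zero_ne_one hbinv
    have hw0ne : f (inl 0) ≠ 0 := by rw [hw0]; exact mul_ne_zero hzb0 hg0
    have hg0w : f (inr 0) = b * f (inl 0) := by
      rw [hw0, ← mul_assoc, mul_comm b, hbinv, one_mul]
    have E0' : (z - b) * f (inl 0) = n * a := by linear_combination E0 + hg0w
    have hane : a ≠ 0 := by
      intro h
      rw [h, mul_zero] at E0'
      rcases mul_eq_zero.1 E0' with h' | h'
      · exact hzb0 h'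
      · exact hw0ne h'
    have hzval : z = (n:ℂ) - 1 + n * b := by
      have h2 : (z - b) * ((z + 1 - n) * a) = n * a := by
        rw [show (z+1-(n:ℂ))*a = f (inl 0) from by linear_combination E1]
        exact E0'
      have h3 : ((z - b) * (z + 1 - n)) * a = (n:ℂ) * a := by linear_combination h2
      have h4 : (z - b) * (z + 1 - n) = n := mul_right_cancel₀ hane h3
      have h5 : z + 1 - n = n * b := by
        calc z + 1 - n = ((z-b)*b) * (z+1-n) := by rw [hbinv]; ring
        _ = ((z-b)*(z+1-n))*b := by ring
        _ = n * b := by rw [h4]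
      linear_combination h5
    have hbquad : ((n:ℂ)-1)*b^2 + ((n:ℂ)-1)*b - 1 = 0 := by
      linear_combination (-1:ℂ) * hbz + (-b) * hzval
    have hzb : z = b + 1/b := by
      field_simp
      linear_combination -hbz
    rcases quad_roots hn b hbquad with hbb | hbb
    · rw [hzb, hbb]
    · exfalso
      rw [hbb] at hbnorm
      have hnorm : ‖(-1 - (bR n : ℂ))‖ = 1 + bR n := by
        rw [show (-1 - (bR n : ℂ)) = ((-1 - bR n : ℝ) : ℂ) by push_cast; ring,
          Complex.norm_real, Real.norm_eq_abs, abs_of_neg (by linarith [bR_pos hn])]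
        ring
      rw [hnorm] at hbnorm
      linarith [bR_pos hn]

/-- For `n ≥ 2`, the set of eigenvalues of the shift on `ℓ^p` of the
fly-swatter (for any `1 ≤ p < ∞`) is exactly `{−1, b + 1/b}` where
`b = −1/2 + (1/2)√((n+3)/(n−1))`. -/
theorem stmt14 (n : ℕ) (hn : 2 ≤ n) (p : ℝ) (hp : 1 ≤ p) :
    {z : ℂ | ∃ f : (Fin (n + 1) ⊕ ℕ) → ℂ, f ≠ 0 ∧ memlp f p ∧
        ∀ x, shiftOp (flyswatter n) f x = z * f x}
      = {(-1 : ℂ),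
          (((-1 / 2 + Real.sqrt (((n : ℝ) + 3) / ((n : ℝ) - 1)) / 2 : ℝ) : ℂ) +
            1 / ((-1 / 2 + Real.sqrt (((n : ℝ) + 3) / ((n : ℝ) - 1)) / 2 : ℝ) : ℂ))} := by
  have hkey : ((-1 / 2 + Real.sqrt (((n : ℝ) + 3) / ((n : ℝ) - 1)) / 2 : ℝ) : ℂ) = (bR n : ℂ) := by
    norm_num [bR]
  ext z
  simp only [Set.mem_setOf_eq, Set.mem_insert_iff, Set.mem_singleton_iff, hkey]
  constructor
  · rintro ⟨f, h0, hmem, he⟩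
    exact forward hn hp f h0 hmem he
  · rintro (rfl | rfl)
    · exact eig_neg_one hn p hp
    · exact eig_b hn p hp
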